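/- Let n ≥ 2, let K_n be the complete simple digraph on n vertices (x → y for all x ≠ y), and let 𝔽 be a field. Then C_n(dFl(K_n)) = 0 (K_n has no directed (n+1)-cliques), and there exists a nonzero chain c ∈ C_{n−1}(dFl(K_n)) with ∂c = 0. Consequently the degree-(n−1) homology of the chain complex (C_•(dFl(K_n)), ∂) is nonzero. -/

import Mathlib

set_option maxHeartbeats 1000000
set_option synthInstance.maxHeartbeats 400000


/-- The directed flag complex of a digraph: all directed cliques. -/
def dFl {V : Type*} (E : V → V → Prop) : Set (List V) :=
  {p | p ≠ [] ∧ p.Nodup ∧ p.Pairwise E}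

noncomputable section

variable (𝔽 : Type*) [Field 𝔽] {V : Type*}

/-- The simplicial boundary of a single path:
`∂(v₀…v_k) = Σ_{i=0}^{k} (−1)^i v₀…v̂_i…v_k`. -/
def bdSingle (p : List V) : List V →₀ 𝔽 :=
  ∑ i ∈ Finset.range p.length,
    ((-1 : 𝔽) ^ i) • Finsupp.single (p.eraseIdx i) (1 : 𝔽)

/-- The boundary map on the free `𝔽`-vector space on paths. -/
def bd : (List V →₀ 𝔽) →ₗ[𝔽] (List V →₀ 𝔽) :=
  Finsupp.linearCombination 𝔽 (bdSingle 𝔽)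

/-- `C_k(K)`: the span of the simplices of `K` with `k+1` vertices. -/
def Ck (K : Set (List V)) (k : ℕ) : Submodule 𝔽 (List V →₀ 𝔽) :=
  Submodule.span 𝔽 {x | ∃ p ∈ K, p.length = k + 1 ∧ x = Finsupp.single p (1 : 𝔽)}

/- ----------------- auxiliary lemmas ----------------- -/

lemma eraseIdx_eraseIdx_of_le {α : Type*} : ∀ (p : List α) (i j : ℕ), i ≤ j →
    (p.eraseIdx i).eraseIdx j = (p.eraseIdx (j + 1)).eraseIdx i
  | [], _, _, _ => by simp
  | _ :: _, 0, _, _ => by simp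
  | a :: t, i + 1, j + 1, h => by
      simp only [List.eraseIdx_cons_succ, List.eraseIdx_cons_zero]
      rw [eraseIdx_eraseIdx_of_le t i j (Nat.le_of_succ_le_succ h)]
  | _ :: _, i + 1, 0, h => absurd h (by omega)

lemma bd_single (p : List V) : bd 𝔽 (Finsupp.single p (1 : 𝔽)) = bdSingle 𝔽 p := by
  simp [bd, Finsupp.linearCombination_single]

lemma bd_bdSingle (p : List V) : bd 𝔽 (bdSingle 𝔽 p) = 0 := by
  rw [bdSingle, map_sum]
  have hterm : ∀ i ∈ Finset.range p.length,
      bd 𝔽 (((-1 : 𝔽) ^ i) • Finsupp.single (p.eraseIdx i) (1 : 𝔽)) =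
      ∑ j ∈ Finset.range (p.length - 1),
        ((-1 : 𝔽) ^ (i + j)) • Finsupp.single ((p.eraseIdx i).eraseIdx j) (1 : 𝔽) := by
    intro i hi
    rw [map_smul, bd_single, bdSingle,
      List.length_eraseIdx_of_lt (Finset.mem_range.mp hi), Finset.smul_sum]
    refine Finset.sum_congr rfl fun j _ => ?_
    rw [smul_smul, ← pow_add]
  rw [Finset.sum_congr rfl hterm, ← Finset.sum_product']
  refine Finset.sum_involution
    (fun a _ => if a.1 ≤ a.2 then (a.2 + 1, a.1) else (a.2, a.1 - 1)) ?_ ?_ ?_ ?_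
  · rintro ⟨i, j⟩ ha
    by_cases hij : i ≤ j
    · simp only [hij, if_true]
      have hw : (p.eraseIdx (j + 1)).eraseIdx i = (p.eraseIdx i).eraseIdx j :=
        (eraseIdx_eraseIdx_of_le p i j hij).symm
      have hc : ((-1 : 𝔽) ^ (i + j) + (-1 : 𝔽) ^ (j + 1 + i)) = 0 := by
        have h1 : j + 1 + i = (i + j) + 1 := by omega
        rw [h1, pow_succ]; ring
      simp only [hw, ← add_smul, hc, zero_smul]
    · simp only [hij, if_false]
      have hj : j ≤ i - 1 := by omega
      have hw : (p.eraseIdx j).eraseIdx (i - 1) = (p.eraseIdx i).eraseIdx j := by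
        rw [eraseIdx_eraseIdx_of_le p j (i - 1) hj]
        congr 2
        omega
      have hc : ((-1 : 𝔽) ^ (i + j) + (-1 : 𝔽) ^ (j + (i - 1))) = 0 := by
        have h1 : i + j = (j + (i - 1)) + 1 := by omega
        rw [h1, pow_succ]; ring
      simp only [hw, ← add_smul, hc, zero_smul]
  · rintro ⟨i, j⟩ ha _
    by_cases hij : i ≤ j <;>
      simp only [hij, if_true, if_false, ne_eq, Prod.mk.injEq, not_and] <;>
      intro h1 h2 <;> omega
  · rintro ⟨i, j⟩ ha
    simp only [Finset.mem_product, Finset.mem_range] at ha ⊢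
    by_cases hij : i ≤ j <;> simp only [hij, if_true, if_false] <;> omega
  · rintro ⟨i, j⟩ ha
    by_cases hij : i ≤ j
    · have h1 : ¬ (j + 1 ≤ i) := by omega
      simp [hij, h1]
    · have h1 : j ≤ i - 1 := by omega
      have h2 : i - 1 + 1 = i := by omega
      simp [hij, h1, h2]

lemma bd_bd (x : List V →₀ 𝔽) : bd 𝔽 (bd 𝔽 x) = 0 := by
  induction x using Finsupp.induction_linear with
  | zero => simp
  | add a b ha hb => rw [map_add, map_add, ha, hb, add_zero]
  | single p b =>
      have h1 : bd 𝔽 (Finsupp.single p b) = b • bdSingle 𝔽 p := by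
        rw [bd, Finsupp.linearCombination_single]
      rw [h1, map_smul, bd_bdSingle, smul_zero]

lemma bdSingle_apply_eraseIdx_zero (v : List V) (hnd : v.Nodup) (hne : v ≠ []) :
    (bdSingle 𝔽 v) (v.eraseIdx 0) = 1 := by
  obtain ⟨a, t, rfl⟩ : ∃ a t, v = a :: t := by
    cases v with
    | nil => exact absurd rfl hne
    | cons a t => exact ⟨a, t, rfl⟩
  have hat : a ∉ t := (List.nodup_cons.mp hnd).1
  rw [bdSingle, Finsupp.finset_sum_apply]
  rw [Finset.sum_eq_single_of_mem 0 (by simp)]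
  · simp
  · intro i hi hi0
    obtain ⟨k, rfl⟩ : ∃ k, i = k + 1 := ⟨i - 1, by omega⟩
    have hne' : (a :: t).eraseIdx (k + 1) ≠ (a :: t).eraseIdx 0 := by
      simp only [List.eraseIdx_cons_succ, List.eraseIdx_cons_zero]
      intro h
      exact hat (by rw [← h]; exact List.mem_cons_self)
    rw [Finsupp.smul_apply, Finsupp.single_eq_of_ne' hne', smul_zero]

lemma Ck_eq_span_image (K : Set (List V)) (k : ℕ) :
    Ck 𝔽 K k = Submodule.span 𝔽
      ((fun p => Finsupp.single p (1 : 𝔽)) '' {p | p ∈ K ∧ p.length = k + 1}) := by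
  rw [Ck]
  congr 1
  ext x
  constructor
  · rintro ⟨p, hp, hlen, rfl⟩; exact ⟨p, ⟨hp, hlen⟩, rfl⟩
  · rintro ⟨p, ⟨hp, hlen⟩, rfl⟩; exact ⟨p, hp, hlen, rfl⟩

lemma finiteDimensional_Ck (K : Set (List V)) (k : ℕ)
    (hfin : {p | p ∈ K ∧ p.length = k + 1}.Finite) :
    FiniteDimensional 𝔽 (Ck 𝔽 K k) := by
  rw [Ck_eq_span_image]
  exact FiniteDimensional.span_of_finite 𝔽 (hfin.image _)

lemma finrank_Ck (K : Set (List V)) (k : ℕ)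
    (hfin : {p | p ∈ K ∧ p.length = k + 1}.Finite) :
    Module.finrank 𝔽 (Ck 𝔽 K k) = Nat.card {p | p ∈ K ∧ p.length = k + 1} := by
  haveI := hfin.fintype
  have hli : LinearIndependent 𝔽
      (fun p : {p | p ∈ K ∧ p.length = k + 1} => Finsupp.single (p : List V) (1 : 𝔽)) := by
    have h0 : LinearIndependent 𝔽 (fun p : List V => Finsupp.single p (1 : 𝔽)) := by
      have := (Finsupp.basisSingleOne (ι := List V) (R := 𝔽)).linearIndependent
      rwa [Finsupp.coe_basisSingleOne] at this
    exact h0.comp Subtype.val Subtype.val_injective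
  rw [Ck_eq_span_image, Set.image_eq_range, finrank_span_eq_card hli,
    Nat.card_eq_fintype_card]

lemma exists_ker_ne_zero {M : Type*} [AddCommGroup M] [Module 𝔽 M]
    (f : M →ₗ[𝔽] M) (A B W : Submodule 𝔽 M) [FiniteDimensional 𝔽 A] [FiniteDimensional 𝔽 B]
    (hmap : ∀ x ∈ A, f x ∈ W) (hWB : W < B)
    (hle : Module.finrank 𝔽 B ≤ Module.finrank 𝔽 A) :
    ∃ c, c ∈ A ∧ c ≠ 0 ∧ f c = 0 := by
  haveI : FiniteDimensional 𝔽 W := Submodule.finiteDimensional_of_le hWB.le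
  let φ : A →ₗ[𝔽] M := f.comp A.subtype
  have hrange : LinearMap.range φ ≤ W := by
    rintro _ ⟨⟨u, hu⟩, rfl⟩
    exact hmap u hu
  have hr1 : Module.finrank 𝔽 (LinearMap.range φ) ≤ Module.finrank 𝔽 W :=
    Submodule.finrank_mono hrange
  have hr2 : Module.finrank 𝔽 W < Module.finrank 𝔽 B :=
    Submodule.finrank_lt_finrank_of_lt hWB
  have hrn := LinearMap.finrank_range_add_finrank_ker φ
  have hker : LinearMap.ker φ ≠ ⊥ := by
    intro h
    rw [h, finrank_bot] at hrn
    omega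
  obtain ⟨x, hx, hx0⟩ := Submodule.exists_mem_ne_zero_of_ne_bot hker
  exact ⟨x, x.2, fun h => hx0 (Subtype.ext h), LinearMap.mem_ker.mp hx⟩

/-- For `n ≥ 2` and the complete simple digraph `K_n` on `n` vertices:
`C_n(dFl K_n) = 0` (no directed `(n+1)`-cliques), there is a nonzero `(n−1)`-cycle, and
the degree-`(n−1)` homology of `(C_•(dFl K_n), ∂)` is nonzero (there is a cycle in
`C_{n−1}` that is not the boundary of any chain of `C_n`). -/
theorem complete_digraph_homology_nonzero (n : ℕ) (hn : 2 ≤ n) :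
    (∀ p ∈ dFl (fun x y : Fin n => x ≠ y), p.length ≠ n + 1) ∧
    Ck 𝔽 (dFl (fun x y : Fin n => x ≠ y)) n = ⊥ ∧
    (∃ c : List (Fin n) →₀ 𝔽,
      c ∈ Ck 𝔽 (dFl (fun x y : Fin n => x ≠ y)) (n - 1) ∧ c ≠ 0 ∧ bd 𝔽 c = 0) ∧
    (∃ c : List (Fin n) →₀ 𝔽,
      c ∈ Ck 𝔽 (dFl (fun x y : Fin n => x ≠ y)) (n - 1) ∧ bd 𝔽 c = 0 ∧
      ∀ b ∈ Ck 𝔽 (dFl (fun x y : Fin n => x ≠ y)) n, bd 𝔽 b ≠ c) := by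
  set K : Set (List (Fin n)) := dFl (fun x y : Fin n => x ≠ y) with hKdef
  have hmem : ∀ p : List (Fin n), p ≠ [] → p.Nodup → p ∈ K := by
    intro p h1 h2
    exact ⟨h1, h2, h2⟩
  -- Part 1
  have part1 : ∀ p ∈ K, p.length ≠ n + 1 := by
    intro p hp h
    have := hp.2.1.length_le_card
    rw [Fintype.card_fin] at this
    omega
  -- Part 2
  have part2 : Ck 𝔽 K n = ⊥ := by
    have hset : {x : List (Fin n) →₀ 𝔽 | ∃ p ∈ K, p.length = n + 1 ∧
        x = Finsupp.single p (1 : 𝔽)} = ∅ := by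
      ext x
      simp only [Set.mem_setOf_eq, Set.mem_empty_iff_false, iff_false]
      rintro ⟨p, hp, hlen, -⟩
      exact part1 p hp hlen
    rw [Ck, hset, Submodule.span_empty]
  -- Part 3: a nonzero cycle in degree n-1
  have part3 : ∃ c : List (Fin n) →₀ 𝔽, c ∈ Ck 𝔽 K (n - 1) ∧ c ≠ 0 ∧ bd 𝔽 c = 0 := by
    -- finiteness of the simplex sets
    have hfin1 : {p | p ∈ K ∧ p.length = (n - 1) + 1}.Finite :=
      (List.finite_length_eq (Fin n) ((n - 1) + 1)).subset (fun p hp => hp.2)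
    have hfin0 : {p | p ∈ K ∧ p.length = (n - 2) + 1}.Finite :=
      (List.finite_length_eq (Fin n) ((n - 2) + 1)).subset (fun p hp => hp.2)
    haveI hFD1 : FiniteDimensional 𝔽 (Ck 𝔽 K (n - 1)) := finiteDimensional_Ck 𝔽 K (n - 1) hfin1
    haveI hFD0 : FiniteDimensional 𝔽 (Ck 𝔽 K (n - 2)) := finiteDimensional_Ck 𝔽 K (n - 2) hfin0
    -- dim C_{n-2} ≤ dim C_{n-1} via appending the missing letter
    have hmiss : ∀ p : List (Fin n), p.Nodup → p.length = n - 1 → ∃ x : Fin n, x ∉ p := by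
      intro p hnd hlen
      by_contra h
      push_neg at h
      have hsub : (Finset.univ : Finset (Fin n)) ⊆ p.toFinset :=
        fun x _ => List.mem_toFinset.mpr (h x)
      have hcard := Finset.card_le_card hsub
      rw [Finset.card_univ, Fintype.card_fin, List.toFinset_card_of_nodup hnd, hlen] at hcard
      omega
    have hcard : Nat.card {p | p ∈ K ∧ p.length = (n - 2) + 1} ≤
        Nat.card {p | p ∈ K ∧ p.length = (n - 1) + 1} := by
      haveI : Finite ↥{p | p ∈ K ∧ p.length = (n - 1) + 1} := hfin1.to_subtype
      have hx : ∀ p : ↥{p | p ∈ K ∧ p.length = (n - 2) + 1}, ∃ x : Fin n, x ∉ p.val :=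
        fun p => hmiss p.val p.2.1.2.1 (by have := p.2.2; omega)
      choose x hx using hx
      have hglen : ∀ p : ↥{p | p ∈ K ∧ p.length = (n - 2) + 1},
          (p.val ++ [x p]).length = (n - 1) + 1 := by
        intro p
        have := p.2.2
        simp only [List.length_append, List.length_cons, List.length_nil]
        omega
      refine Nat.card_le_card_of_injective
        (fun p => ⟨p.val ++ [x p], ?_, hglen p⟩) ?_
      · refine hmem _ (by simp) ?_
        rw [List.nodup_append]
        refine ⟨p.2.1.2.1, List.nodup_singleton _, ?_⟩
        intro a ha b hb
        rw [List.mem_singleton] at hb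
        subst hb
        exact fun h => hx p (h ▸ ha)
      · intro p q h
        have h' : p.val ++ [x p] = q.val ++ [x q] := congrArg Subtype.val h
        apply Subtype.ext
        exact List.append_inj_left h' (by rw [p.2.2, q.2.2])
    have hle : Module.finrank 𝔽 (Ck 𝔽 K (n - 2)) ≤ Module.finrank 𝔽 (Ck 𝔽 K (n - 1)) := by
      rw [finrank_Ck 𝔽 K (n - 2) hfin0, finrank_Ck 𝔽 K (n - 1) hfin1]
      exact hcard
    -- the test word v and the functional L
    set v : List (Fin n) := List.ofFn (fun i : Fin (n - 1) => Fin.castLE (by omega) i) with hvdef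
    have hv_len : v.length = n - 1 := List.length_ofFn
    have hv_nodup : v.Nodup := List.nodup_ofFn.mpr (Fin.castLE_injective _)
    have hv_ne : v ≠ [] := by
      intro h
      rw [h] at hv_len
      simp at hv_len
      omega
    set L : (List (Fin n) →₀ 𝔽) →ₗ[𝔽] 𝔽 :=
      (Finsupp.lapply (v.eraseIdx 0)).comp (bd 𝔽) with hLdef
    set W : Submodule 𝔽 (List (Fin n) →₀ 𝔽) := Ck 𝔽 K (n - 2) ⊓ LinearMap.ker L with hWdef
    haveI hFDW : FiniteDimensional 𝔽 W := Submodule.finiteDimensional_of_le inf_le_left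
    -- y witnesses W < C_{n-2}
    have hyC : Finsupp.single v (1 : 𝔽) ∈ Ck 𝔽 K (n - 2) :=
      Submodule.subset_span ⟨v, hmem v hv_ne hv_nodup, by omega, rfl⟩
    have hLy : L (Finsupp.single v (1 : 𝔽)) = 1 := by
      rw [hLdef, LinearMap.comp_apply, bd_single, Finsupp.lapply_apply]
      exact bdSingle_apply_eraseIdx_zero 𝔽 v hv_nodup hv_ne
    have hWlt : W < Ck 𝔽 K (n - 2) := by
      refine lt_of_le_of_ne inf_le_left ?_
      intro h
      have hyW : Finsupp.single v (1 : 𝔽) ∈ W := h.symm ▸ hyC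
      have h2 : L (Finsupp.single v (1 : 𝔽)) = 0 := hyW.2
      rw [hLy] at h2
      exact one_ne_zero h2
    -- bd maps C_{n-1} into C_{n-2}
    have hbd_le : Ck 𝔽 K (n - 1) ≤ Submodule.comap (bd 𝔽) (Ck 𝔽 K (n - 2)) := by
      rw [Ck]
      apply Submodule.span_le.mpr
      rintro x ⟨p, hp, hlen, rfl⟩
      simp only [SetLike.mem_coe, Submodule.mem_comap]
      rw [bd_single, bdSingle]
      refine Submodule.sum_mem _ fun i hi => Submodule.smul_mem _ _ (Submodule.subset_span ?_)
      have hi' : i < p.length := Finset.mem_range.mp hi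
      have hlen' : (p.eraseIdx i).length = n - 1 := by
        rw [List.length_eraseIdx_of_lt hi']
        omega
      have hnd' : (p.eraseIdx i).Nodup := hp.2.1.eraseIdx i
      refine ⟨p.eraseIdx i, hmem _ ?_ hnd', by omega, rfl⟩
      intro h
      rw [h] at hlen'
      simp at hlen'
      omega
    have hmap : ∀ x ∈ Ck 𝔽 K (n - 1), bd 𝔽 x ∈ W := by
      intro x hx
      refine Submodule.mem_inf.mpr ⟨hbd_le hx, LinearMap.mem_ker.mpr ?_⟩
      show L (bd 𝔽 x) = 0
      rw [hLdef, LinearMap.comp_apply, Finsupp.lapply_apply, bd_bd]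
      rfl
    obtain ⟨c, hcA, hc0, hcbd⟩ :=
      exists_ker_ne_zero 𝔽 (bd 𝔽) (Ck 𝔽 K (n - 1)) (Ck 𝔽 K (n - 2)) W hmap hWlt hle
    exact ⟨c, hcA, hc0, hcbd⟩
  -- Part 4 follows from parts 2 and 3
  obtain ⟨c, hc1, hc2, hc3⟩ := part3
  refine ⟨part1, part2, ⟨c, hc1, hc2, hc3⟩, ⟨c, hc1, hc3, ?_⟩⟩
  intro b hb
  rw [part2, Submodule.mem_bot] at hb
  rw [hb, map_zero]
  exact fun h => hc2 h.symm

end
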